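/- Let F = {{1,2,3},{1,4,5},{1,6,7},{2,4,7},{2,5,6},{3,4,6},{3,5,7}} and for each triple {i,j,k} ∈ F let T_{ijk} be the set of vectors in ℚ^7 whose coordinates at positions i, j, k are 0 and are each ±1 elsewhere; let T be the union of the seven sets T_{ijk}, and let K be the simple graph on T in which two distinct vectors are adjacent if and only if their squared Euclidean distance equals 16. Then K has exactly 112 vertices, exactly 56 edges, independence number 56, and chromatic number 2. -/

import Mathlib

set_option maxRecDepth 1000000
set_option maxHeartbeats 8000000

/-- The graph on a set `P` of points of `ℚⁿ` where two distinct points are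
adjacent iff their squared Euclidean distance equals `s`. -/
def distSqGraph {n : ℕ} (P : Set (Fin n → ℚ)) (s : ℚ) : SimpleGraph P where
  Adj x y := x ≠ y ∧ ∑ i, (x.1 i - y.1 i) ^ 2 = s
  symm := by
    refine ⟨?_⟩
    rintro x y ⟨hne, h⟩
    refine ⟨hne.symm, ?_⟩
    rw [← h]
    exact Finset.sum_congr rfl fun i _ => by ring
  loopless := by refine ⟨?_⟩; rintro x ⟨h, -⟩; exact h rfl

/-- The family `F = {{1,2,3},{1,4,5},{1,6,7},{2,4,7},{2,5,6},{3,4,6},{3,5,7}}`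
of triples from `{1,…,7}`, written with `0`-based indices. -/
def fano : Finset (Finset (Fin 7)) :=
  {{0, 1, 2}, {0, 3, 4}, {0, 5, 6}, {1, 3, 6}, {1, 4, 5}, {2, 3, 5}, {2, 4, 6}}

/-- `S`: vectors of `ℚ⁷` that are `±2` on some triple of `F` and `0` elsewhere. -/
def Sset : Set (Fin 7 → ℚ) :=
  {x | ∃ A ∈ fano, (∀ i ∈ A, x i = 2 ∨ x i = -2) ∧ ∀ i ∉ A, x i = 0}

/-- `T`: vectors of `ℚ⁷` that are `0` on some triple of `F` and `±1` elsewhere. -/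
def Tset : Set (Fin 7 → ℚ) :=
  {x | ∃ A ∈ fano, (∀ i ∈ A, x i = 0) ∧ ∀ i ∉ A, x i = 1 ∨ x i = -1}

/-! ### Auxiliary definitions -/

def Tfin : Finset (Fin 7 → ℚ) :=
  fano.biUnion fun A => Fintype.piFinset fun i => if i ∈ A then ({0} : Finset ℚ) else {1, -1}

def posP (x : Fin 7 → ℚ) : Prop :=
  x 0 = 1 ∨ (x 0 = 0 ∧ (x 1 = 1 ∨ (x 1 = 0 ∧ (x 2 = 1 ∨ (x 2 = 0 ∧ x 3 = 1)))))

instance : DecidablePred posP := fun x => by unfold posP; infer_instance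

/-! ### decide facts -/

lemma Tfin_card : Tfin.card = 112 := by decide

lemma pairs_card : (Tfin.image fun x => ({x, -x} : Finset (Fin 7 → ℚ))).card = 56 := by decide

lemma sym2_card : (Tfin.image fun x => (s(x, -x) : Sym2 (Fin 7 → ℚ))).card = 56 := by
  decide

lemma half_card : (Tfin.filter posP).card = 56 := by decide

lemma posP_neg : ∀ x ∈ Tfin, (posP x ↔ ¬ posP (-x)) := by decide

lemma fano_compl_card : ∀ A ∈ fano, Aᶜ.card = 4 := by decide

lemma fano_union_compl_card : ∀ A ∈ fano, ∀ B ∈ fano, A ≠ B → ((A ∪ B)ᶜ).card = 2 := by decide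

/-! ### membership -/

lemma mem_Tfin (x : Fin 7 → ℚ) : x ∈ Tfin ↔ x ∈ Tset := by
  unfold Tfin Tset
  simp only [Finset.mem_biUnion, Fintype.mem_piFinset, Set.mem_setOf_eq]
  refine exists_congr fun A => and_congr_right fun _ => ?_
  constructor
  · intro h
    refine ⟨fun i hi => ?_, fun i hi => ?_⟩
    · have := h i; simpa [hi] using this
    · have := h i; simpa [hi] using this
  · rintro ⟨h1, h2⟩ i
    by_cases hi : i ∈ A
    · simp [hi, h1 i hi]
    · simpa [hi] using h2 i hi

lemma Tset_eq : Tset = ↑Tfin := Set.ext fun x => by rw [Finset.mem_coe, mem_Tfin]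

lemma neg_mem_Tset {x : Fin 7 → ℚ} (hx : x ∈ Tset) : -x ∈ Tset := by
  obtain ⟨A, hA, h0, h1⟩ := hx
  refine ⟨A, hA, fun i hi => by simp [h0 i hi], fun i hi => ?_⟩
  rcases h1 i hi with h | h <;> simp [h]

lemma ne_neg_Tset {x : Fin 7 → ℚ} (hx : x ∈ Tset) : x ≠ -x := by
  obtain ⟨A, hA, h0, h1⟩ := hx
  have hcard : Aᶜ.card = 4 := fano_compl_card A hA
  have hpos : 0 < Aᶜ.card := by omega
  obtain ⟨i, hi⟩ := Finset.card_pos.mp hpos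
  have hiA : i ∉ A := Finset.mem_compl.mp hi
  intro h
  have : x i = -x i := by rw [← Pi.neg_apply, ← h]
  rcases h1 i hiA with hv | hv <;> rw [hv] at this <;> norm_num at this

lemma norm_sq {x : Fin 7 → ℚ} (hx : x ∈ Tset) : ∑ i, x i ^ 2 = 4 := by
  obtain ⟨A, hA, h0, h1⟩ := hx
  rw [← Finset.sum_add_sum_compl A]
  have e1 : ∑ i ∈ A, x i ^ 2 = 0 := Finset.sum_eq_zero fun i hi => by rw [h0 i hi]; ring
  have e2 : ∑ i ∈ Aᶜ, x i ^ 2 = ∑ _i ∈ Aᶜ, (1 : ℚ) := by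
    refine Finset.sum_congr rfl fun i hi => ?_
    rcases h1 i (Finset.mem_compl.mp hi) with h | h <;> rw [h] <;> norm_num
  rw [e1, e2, Finset.sum_const, fano_compl_card A hA]
  norm_num

/-! ### adjacency characterization -/

lemma sum_dist_eq {x y : Fin 7 → ℚ} (hx : x ∈ Tset) (hy : y ∈ Tset) :
    ∑ i, (x i - y i) ^ 2 = 8 - 2 * ∑ i, x i * y i := by
  have expand : ∀ i : Fin 7, (x i - y i) ^ 2 = x i ^ 2 + y i ^ 2 - 2 * (x i * y i) :=
    fun i => by ring
  calc ∑ i, (x i - y i) ^ 2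
      = ∑ i, (x i ^ 2 + y i ^ 2 - 2 * (x i * y i)) := Finset.sum_congr rfl fun i _ => expand i
    _ = (∑ i, (x i ^ 2 + y i ^ 2)) - ∑ i, 2 * (x i * y i) := Finset.sum_sub_distrib _ _
    _ = (∑ i, x i ^ 2 + ∑ i, y i ^ 2) - 2 * ∑ i, x i * y i := by
        rw [Finset.sum_add_distrib, Finset.mul_sum]
    _ = 8 - 2 * ∑ i, x i * y i := by rw [norm_sq hx, norm_sq hy]; norm_num

lemma adj_iff {x y : Fin 7 → ℚ} (hx : x ∈ Tset) (hy : y ∈ Tset) :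
    (∑ i, (x i - y i) ^ 2 = 16) ↔ y = -x := by
  constructor
  · intro h
    have hinner : ∑ i, x i * y i = -4 := by
      have := sum_dist_eq hx hy
      rw [h] at this; linarith
    obtain ⟨A, hA, hx0, hx1⟩ := hx
    obtain ⟨B, hB, hy0, hy1⟩ := hy
    by_cases hAB : A = B
    · subst hAB
      -- all terms off A
      have hsplit : ∑ i ∈ A, x i * y i + ∑ i ∈ Aᶜ, x i * y i = ∑ i, x i * y i :=
        Finset.sum_add_sum_compl A _
      have hA0 : ∑ i ∈ A, x i * y i = 0 :=
        Finset.sum_eq_zero fun i hi => by rw [hx0 i hi]; ring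
      have hcompl : ∑ i ∈ Aᶜ, x i * y i = -4 := by
        rw [hA0] at hsplit; linarith [hinner, hsplit]
      have hzero : ∑ i ∈ Aᶜ, (1 + x i * y i) = 0 := by
        rw [Finset.sum_add_distrib, Finset.sum_const, hcompl, fano_compl_card A hA]
        norm_num
      have hnonneg : ∀ i ∈ Aᶜ, (0 : ℚ) ≤ 1 + x i * y i := by
        intro i hi
        have hiA := Finset.mem_compl.mp hi
        rcases hx1 i hiA with h1 | h1 <;> rcases hy1 i hiA with h2 | h2 <;>
          rw [h1, h2] <;> norm_num
      have hall := (Finset.sum_eq_zero_iff_of_nonneg hnonneg).mp hzero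
      funext i
      by_cases hiA : i ∈ A
      · rw [Pi.neg_apply, hy0 i hiA, hx0 i hiA, neg_zero]
      · have hterm := hall i (Finset.mem_compl.mpr hiA)
        rw [Pi.neg_apply]
        rcases hx1 i hiA with h1 | h1 <;> rcases hy1 i hiA with h2 | h2 <;>
          rw [h1, h2] <;> rw [h1, h2] at hterm <;> revert hterm <;> norm_num
    · exfalso
      have hsplit : ∑ i ∈ (A ∪ B), x i * y i + ∑ i ∈ (A ∪ B)ᶜ, x i * y i = ∑ i, x i * y i :=
        Finset.sum_add_sum_compl (A ∪ B) _
      have hU0 : ∑ i ∈ (A ∪ B), x i * y i = 0 := by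
        refine Finset.sum_eq_zero fun i hi => ?_
        rcases Finset.mem_union.mp hi with hiA | hiB
        · rw [hx0 i hiA]; ring
        · rw [hy0 i hiB]; ring
      have hcompl : ∑ i ∈ (A ∪ B)ᶜ, x i * y i = -4 := by
        rw [hU0] at hsplit; linarith [hinner, hsplit]
      have hlb : ∑ i ∈ (A ∪ B)ᶜ, (-1 : ℚ) ≤ ∑ i ∈ (A ∪ B)ᶜ, x i * y i := by
        refine Finset.sum_le_sum fun i hi => ?_
        have hiU := Finset.mem_compl.mp hi
        have hiA : i ∉ A := fun h => hiU (Finset.mem_union_left _ h)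
        have hiB : i ∉ B := fun h => hiU (Finset.mem_union_right _ h)
        rcases hx1 i hiA with h1 | h1 <;> rcases hy1 i hiB with h2 | h2 <;>
          rw [h1, h2] <;> norm_num
      rw [Finset.sum_const, fano_union_compl_card A hA B hB hAB, hcompl] at hlb
      norm_num at hlb
  · intro h
    subst h
    have : ∀ i : Fin 7, (x i - (-x) i) ^ 2 = 4 * x i ^ 2 := fun i => by
      rw [Pi.neg_apply]; ring
    calc ∑ i, (x i - (-x) i) ^ 2 = ∑ i, 4 * x i ^ 2 := Finset.sum_congr rfl fun i _ => this i
      _ = 4 * ∑ i, x i ^ 2 := (Finset.mul_sum _ _ _).symm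
      _ = 16 := by rw [norm_sq hx]; norm_num

lemma adj_iff' (a b : ↥Tset) :
    (distSqGraph Tset 16).Adj a b ↔ (b : Fin 7 → ℚ) = -(a : Fin 7 → ℚ) := by
  constructor
  · rintro ⟨hne, hsum⟩
    exact (adj_iff a.2 b.2).mp hsum
  · intro h
    refine ⟨fun hab => ?_, (adj_iff a.2 b.2).mpr h⟩
    rw [hab] at h
    exact ne_neg_Tset b.2 h
  -- note: distSqGraph.Adj is definitionally the conjunction

/-! ### the main theorem -/

/-- The graph `K` on `T` (squared distance `16`) has `112` vertices, `56` edges,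
independence number `56`, and chromatic number `2`. -/
theorem card_edges_indepNum_chromaticNumber_K :
    Tset.ncard = 112 ∧
    (distSqGraph Tset 16).edgeSet.ncard = 56 ∧
    ((∃ M : Set ↥Tset,
      M.Pairwise (fun a b => ¬ (distSqGraph Tset 16).Adj a b) ∧ M.ncard = 56) ∧
    ∀ M : Set ↥Tset,
      M.Pairwise (fun a b => ¬ (distSqGraph Tset 16).Adj a b) → M.ncard ≤ 56) ∧
    (distSqGraph Tset 16).chromaticNumber = 2 := by
  set G := distSqGraph Tset 16 with hG
  refine ⟨?_, ?_, ⟨?_, ?_⟩, ?_⟩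
  · -- vertices
    rw [Tset_eq, Set.ncard_coe_finset, Tfin_card]
  · -- edges
    have hinj : Function.Injective (Sym2.map (Subtype.val : ↥Tset → (Fin 7 → ℚ))) :=
      Sym2.map.injective Subtype.val_injective
    have himg : Sym2.map (Subtype.val) '' G.edgeSet
        = ↑(Tfin.image fun x => (s(x, -x) : Sym2 (Fin 7 → ℚ))) := by
      ext e
      constructor
      · rintro ⟨e', he', rfl⟩
        induction e' using Sym2.ind with
        | _ a b =>
          have hadj : G.Adj a b := (SimpleGraph.mem_edgeSet G).mp he'
          have hb : (b : Fin 7 → ℚ) = -(a : Fin 7 → ℚ) := (adj_iff' a b).mp hadj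
          rw [Finset.mem_coe, Finset.mem_image]
          refine ⟨a.1, (mem_Tfin _).mpr a.2, ?_⟩
          show s(a.1, -a.1) = Sym2.map Subtype.val s(a, b)
          rw [Sym2.map_pair_eq, hb]
      · intro he
        rw [Finset.mem_coe, Finset.mem_image] at he
        obtain ⟨x, hx, rfl⟩ := he
        have hxT : x ∈ Tset := (mem_Tfin x).mp hx
        refine ⟨s(⟨x, hxT⟩, ⟨-x, neg_mem_Tset hxT⟩), ?_, ?_⟩
        · exact (SimpleGraph.mem_edgeSet G).mpr ((adj_iff' _ _).mpr rfl)
        · rw [Sym2.map_pair_eq]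
    calc G.edgeSet.ncard
        = (Sym2.map (Subtype.val) '' G.edgeSet).ncard :=
          (Set.ncard_image_of_injective _ hinj).symm
      _ = 56 := by rw [himg, Set.ncard_coe_finset, sym2_card]
  · -- independent set of size 56
    refine ⟨{v : ↥Tset | posP v.1}, ?_, ?_⟩
    · intro a ha b hb hab hadj
      have hb' : (b : Fin 7 → ℚ) = -(a : Fin 7 → ℚ) := (adj_iff' a b).mp hadj
      have haT : a.1 ∈ Tfin := (mem_Tfin _).mpr a.2
      have := (posP_neg a.1 haT).mp ha
      rw [← hb'] at this
      exact this hb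
    · have himg : Subtype.val '' {v : ↥Tset | posP v.1} = ↑(Tfin.filter posP) := by
        ext x
        constructor
        · rintro ⟨v, hv, rfl⟩
          exact Finset.mem_coe.mpr (Finset.mem_filter.mpr ⟨(mem_Tfin _).mpr v.2, hv⟩)
        · intro hx
          obtain ⟨hxT, hxp⟩ := Finset.mem_filter.mp (Finset.mem_coe.mp hx)
          exact ⟨⟨x, (mem_Tfin x).mp hxT⟩, hxp, rfl⟩
      calc ({v : ↥Tset | posP v.1} : Set ↥Tset).ncard
          = (Subtype.val '' {v : ↥Tset | posP v.1}).ncard :=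
            (Set.ncard_image_of_injective _ Subtype.val_injective).symm
        _ = 56 := by rw [himg, Set.ncard_coe_finset, half_card]
  · -- independence number upper bound
    intro M hM
    set P56 := Tfin.image fun x => ({x, -x} : Finset (Fin 7 → ℚ)) with hP56
    have hmaps : ∀ v ∈ M, ({v.1, -v.1} : Finset (Fin 7 → ℚ)) ∈ (↑P56 : Set (Finset (Fin 7 → ℚ))) := by
      intro v _
      exact Finset.mem_coe.mpr (Finset.mem_image.mpr ⟨v.1, (mem_Tfin _).mpr v.2, rfl⟩)
    have hinj : Set.InjOn (fun v : ↥Tset => ({v.1, -v.1} : Finset (Fin 7 → ℚ))) M := by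
      intro a ha b hb hfab
      have hfab' : ({a.1, -a.1} : Finset (Fin 7 → ℚ)) = {b.1, -b.1} := hfab
      have hbmem : (b.1 : Fin 7 → ℚ) ∈ ({a.1, -a.1} : Finset (Fin 7 → ℚ)) := by
        rw [hfab']; exact Finset.mem_insert_self _ _
      rcases Finset.mem_insert.mp hbmem with h | h
      · exact (Subtype.ext h).symm
      · have h' : (b : Fin 7 → ℚ) = -(a : Fin 7 → ℚ) := Finset.mem_singleton.mp h
        have hab : a ≠ b := by
          intro hE
          rw [← hE] at h'
          exact ne_neg_Tset a.2 h'
        exact absurd ((adj_iff' a b).mpr h') (hM ha hb hab)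
    have := Set.ncard_le_ncard_of_injOn _ hmaps hinj (P56.finite_toSet)
    rwa [Set.ncard_coe_finset, pairs_card] at this
  · -- chromatic number
    have hC : G.Coloring Bool := by
      refine SimpleGraph.Coloring.mk (fun v => decide (posP v.1)) ?_
      intro a b hadj
      have hb : (b : Fin 7 → ℚ) = -(a : Fin 7 → ℚ) := (adj_iff' a b).mp hadj
      have haT : a.1 ∈ Tfin := (mem_Tfin _).mpr a.2
      by_cases hp : posP a.1
      · have hnb : ¬ posP b.1 := by rw [hb]; exact (posP_neg a.1 haT).mp hp
        simp [hp, hnb]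
      · have hpb : posP b.1 := by
          rw [hb]
          by_contra hq
          exact hp ((posP_neg a.1 haT).mpr hq)
        simp [hp, hpb]
    have hcol2 : G.Colorable 2 := Fintype.card_bool ▸ hC.colorable
    have hub : G.chromaticNumber ≤ 2 := hcol2.chromaticNumber_le
    have hlb : 2 ≤ G.chromaticNumber := by
      by_contra hlt
      push_neg at hlt
      have h1 : G.chromaticNumber ≤ 1 := by
        simpa using hlt
      have hcol1 : G.Colorable 1 := SimpleGraph.chromaticNumber_le_iff_colorable.mp h1
      obtain ⟨C⟩ := hcol1
      -- produce an explicit edge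
      set x0 : Fin 7 → ℚ := fun i => if i ∈ ({0, 1, 2} : Finset (Fin 7)) then 0 else 1 with hx0
      have hx0T : x0 ∈ Tset := by
        refine ⟨{0, 1, 2}, by decide, fun i hi => ?_, fun i hi => ?_⟩
        · simp only [hx0]; rw [if_pos hi]
        · left; simp only [hx0]; rw [if_neg hi]
      have hadj : G.Adj ⟨x0, hx0T⟩ ⟨-x0, neg_mem_Tset hx0T⟩ := (adj_iff' _ _).mpr rfl
      have := C.valid hadj
      exact this (Subsingleton.elim _ _)
    exact le_antisymm hub hlb
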